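/- Let W \geq 1 and K be positive integers, and let \Delta(\alpha) = \sum_{k=0}^{K} a_k \alpha^k be a polynomial with integer coefficients satisfying |a_k| \leq 12W for all k. Write \Delta(1-\epsilon) = \sum_{i=0}^{K} (-1)^i b_i \epsilon^i, where b_i = \sum_{k=i}^{K} a_k \binom{k}{i}. Suppose that b_0 = b_1 = \dots = b_{j-1} = 0 and b_j \neq 0 for some j \geq 1. Then the polynomial \epsilon \mapsto \Delta(1-\epsilon) has no real zero in the open interval (0, 1/(24W \binom{K+1}{j+2})). -/

import Mathlib

open Finset

/-- Geometric sum bound: for `0 ≤ x ≤ 1/2`, `∑_{m<N} x^m ≤ 2`. -/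
lemma geo_bound (x : ℝ) (h0 : 0 ≤ x) (h1 : x ≤ 1/2) :
    ∀ N, ∑ m ∈ Finset.range N, x ^ m ≤ 2 := by
  intro N
  induction N with
  | zero => norm_num
  | succ n ih =>
      rw [geom_sum_succ]
      have : x * ∑ i ∈ Finset.range n, x ^ i ≤ (1/2) * 2 :=
        mul_le_mul h1 ih (Finset.sum_nonneg fun i _ => pow_nonneg h0 i) (by norm_num)
      linarith

/-- Step lemma: for `r ≥ j+1` and `j+2 ≤ n`, `C(n, r+1) ≤ C(n, r) * C(n, j+2)`. -/
lemma choose_step (n j r : ℕ) (hj : j + 2 ≤ n) (hr : j + 1 ≤ r) :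
    n.choose (r + 1) ≤ n.choose r * n.choose (j + 2) := by
  have h1 : n.choose (r + 1) * (r + 1) = n.choose r * (n - r) :=
    Nat.choose_succ_right_eq n r
  have h2 : n.choose (j + 2) * (j + 2) = n.choose (j + 1) * (n - (j + 1)) :=
    Nat.choose_succ_right_eq n (j + 1)
  have hpos : 0 < n.choose (j + 1) := Nat.choose_pos (by omega)
  have hmul : (n - r) * (j + 2) ≤ (n - (j + 1)) * (r + 1) :=
    Nat.mul_le_mul (Nat.sub_le_sub_left hr n) (by omega)
  have key : n.choose (r + 1) * ((r + 1) * (j + 2)) ≤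
      (n.choose r * n.choose (j + 2)) * ((r + 1) * (j + 2)) := by
    calc n.choose (r + 1) * ((r + 1) * (j + 2))
        = (n.choose r * (n - r)) * (j + 2) := by rw [← Nat.mul_assoc, h1]
      _ ≤ n.choose r * ((n - (j + 1)) * (r + 1)) := by
          rw [Nat.mul_assoc]; exact Nat.mul_le_mul_left _ hmul
      _ ≤ n.choose r * (n.choose (j + 1) * ((n - (j + 1)) * (r + 1))) :=
          Nat.mul_le_mul_left _ (Nat.le_mul_of_pos_left _ hpos)
      _ = (n.choose r * n.choose (j + 2)) * ((r + 1) * (j + 2)) := by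
          have h3 : n.choose (j + 1) * ((n - (j + 1)) * (r + 1))
              = (n.choose (j + 1) * (n - (j + 1))) * (r + 1) := by ring
          rw [h3, ← h2]; ring
  exact Nat.le_of_mul_le_mul_right key (by positivity)

/-- Key combinatorial bound: for `m ≥ 1` and `j+2 ≤ n`,
`C(n, j+1+m) ≤ C(n, j+2)^m`. -/
lemma choose_pow_bound (n j : ℕ) (hj : j + 2 ≤ n) :
    ∀ m, 1 ≤ m → n.choose (j + 1 + m) ≤ n.choose (j + 2) ^ m := by
  intro m hm
  induction m with
  | zero => omega
  | succ m ih =>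
      rcases Nat.eq_or_lt_of_le hm with h | h
      · have h2 : j + 1 + 1 = j + 2 := by ring
        simp [← h, h2]
      · have hm1 : 1 ≤ m := by omega
        have h1 : n.choose (j + 1 + m + 1) ≤ n.choose (j + 1 + m) * n.choose (j + 2) :=
          choose_step n j (j + 1 + m) hj (by omega)
        calc n.choose (j + 1 + (m + 1)) = n.choose (j + 1 + m + 1) := by ring_nf
          _ ≤ n.choose (j + 1 + m) * n.choose (j + 2) := h1
          _ ≤ n.choose (j + 2) ^ m * n.choose (j + 2) :=
              Nat.mul_le_mul_right _ (ih hm1)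
          _ = n.choose (j + 2) ^ (m + 1) := by ring

/-- Let `W, K` be positive integers and `Δ` an integer polynomial of degree at
most `K` with coefficients bounded by `12W` in absolute value. Writing
`Δ(1-ε) = ∑ (-1)^i b_i ε^i` with `b_i = ∑_{k=i}^K a_k binom(k, i)`, if
`b_0 = ⋯ = b_{j-1} = 0` and `b_j ≠ 0` for some `j ≥ 1`, then the polynomial
`ε ↦ Δ(1-ε)` has no real zero in the open interval `(0, 1/(24 W binom(K+1, j+2)))`. -/
theorem stmt_3 (W K : ℕ) (hW : 0 < W) (hK : 0 < K)
    (Δ : Polynomial ℤ) (hdeg : Δ.natDegree ≤ K)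
    (hcoeff : ∀ k, |Δ.coeff k| ≤ 12 * (W : ℤ))
    (b : ℕ → ℤ) (hb : ∀ i, b i = ∑ k ∈ Finset.Icc i K, Δ.coeff k * (k.choose i : ℤ))
    (j : ℕ) (hj1 : 1 ≤ j) (hlow : ∀ i, i < j → b i = 0) (hbj : b j ≠ 0) :
    ∀ ε : ℝ, 0 < ε → ε < 1 / (24 * (W : ℝ) * ((K + 1).choose (j + 2) : ℝ)) →
      Polynomial.aeval (1 - ε) Δ ≠ 0 := by
  intro ε hε hεlt
  -- Degenerate case `j + 2 > K + 1`.
  by_cases hcz : (K + 1).choose (j + 2) = 0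
  · rw [hcz] at hεlt
    norm_num at hεlt
    linarith
  have hj2K : j + 2 ≤ K + 1 := by
    by_contra h
    exact hcz (Nat.choose_eq_zero_of_lt (by omega))
  set c : ℕ := (K + 1).choose (j + 2) with hc
  have hc1 : 1 ≤ c := Nat.one_le_iff_ne_zero.mpr hcz
  have hcR : (1 : ℝ) ≤ (c : ℝ) := by exact_mod_cast hc1
  have hWR : (1 : ℝ) ≤ (W : ℝ) := by exact_mod_cast hW
  have h24 : (0:ℝ) < 24 * W * c := by positivity
  rw [lt_div_iff₀ h24] at hεlt
  -- now hεlt : ε * (24 * W * c) < 1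
  -- The expansion identity.
  have hpow : ∀ k ∈ Finset.range (K+1),
      (1 - ε)^k = ∑ i ∈ Finset.range (K+1), (k.choose i : ℝ) * (-ε)^i := by
    intro k hk
    simp only [Finset.mem_range] at hk
    have h1 : (1 - ε)^k = (-ε + 1)^k := by ring_nf
    rw [h1, add_pow]
    rw [Finset.sum_subset (Finset.range_subset_range.mpr (by omega : k + 1 ≤ K + 1))]
    · exact Finset.sum_congr rfl fun i hi => by rw [one_pow, mul_one, mul_comm]
    · intro i hi hni
      simp only [Finset.mem_range, not_lt] at hni
      rw [Nat.choose_eq_zero_of_lt (by omega)]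
      simp
  have hbi : ∀ i, ((b i : ℤ) : ℝ)
      = ∑ k ∈ Finset.range (K+1), (Δ.coeff k : ℝ) * (k.choose i : ℝ) := by
    intro i
    rw [hb i]
    push_cast
    refine Finset.sum_subset (fun k hk => ?_) (fun k hk hnk => ?_)
    · simp only [Finset.mem_Icc] at hk
      simp only [Finset.mem_range]; omega
    · simp only [Finset.mem_range] at hk
      simp only [Finset.mem_Icc, not_and, not_le] at hnk
      have : k < i := by omega
      rw [Nat.choose_eq_zero_of_lt this]
      simp
  have hA : (Polynomial.aeval (1 - ε) Δ : ℝ)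
      = ∑ i ∈ Finset.range (K+1), (b i : ℝ) * (-ε)^i := by
    rw [Polynomial.aeval_eq_sum_range' (Nat.lt_succ_of_le hdeg) (1 - ε)]
    calc ∑ k ∈ Finset.range (K+1), Δ.coeff k • (1 - ε)^k
        = ∑ k ∈ Finset.range (K+1), (Δ.coeff k : ℝ) * (1 - ε)^k := by
          exact Finset.sum_congr rfl fun k _ => by rw [zsmul_eq_mul]
      _ = ∑ k ∈ Finset.range (K+1), ∑ i ∈ Finset.range (K+1),
            (Δ.coeff k : ℝ) * ((k.choose i : ℝ) * (-ε)^i) := by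
          refine Finset.sum_congr rfl fun k hk => ?_
          rw [hpow k hk, Finset.mul_sum]
      _ = ∑ i ∈ Finset.range (K+1), ∑ k ∈ Finset.range (K+1),
            (Δ.coeff k : ℝ) * ((k.choose i : ℝ) * (-ε)^i) := Finset.sum_comm
      _ = ∑ i ∈ Finset.range (K+1), (b i : ℝ) * (-ε)^i := by
          refine Finset.sum_congr rfl fun i _ => ?_
          rw [hbi i, Finset.sum_mul]
          exact Finset.sum_congr rfl fun k _ => by ring
  -- restrict to indices ≥ j
  have hS : (Polynomial.aeval (1 - ε) Δ : ℝ)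
      = ∑ i ∈ Finset.Ico j (K+1), (b i : ℝ) * (-ε)^i := by
    rw [hA]
    refine (Finset.sum_subset (fun i hi => ?_) (fun i hi hni => ?_)).symm
    · simp only [Finset.mem_Ico] at hi
      simp only [Finset.mem_range]; omega
    · simp only [Finset.mem_range] at hi
      simp only [Finset.mem_Ico, not_and, not_le] at hni
      have : i < j := by omega
      rw [hlow i this]
      simp
  have hsplit : ∑ i ∈ Finset.Ico j (K+1), (b i : ℝ) * (-ε)^i
      = (b j : ℝ) * (-ε)^j
        + ∑ i ∈ Finset.Ico (j+1) (K+1), (b i : ℝ) * (-ε)^i := by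
    rw [Finset.sum_eq_sum_Ico_succ_bot (by omega : j < K + 1)]
  -- bound on |b i|
  have hbbound : ∀ i, |b i| ≤ 12 * (W:ℤ) * ((K+1).choose (i+1) : ℤ) := by
    intro i
    rw [hb i]
    calc |∑ k ∈ Finset.Icc i K, Δ.coeff k * (k.choose i : ℤ)|
        ≤ ∑ k ∈ Finset.Icc i K, |Δ.coeff k * (k.choose i : ℤ)| :=
          Finset.abs_sum_le_sum_abs _ _
      _ ≤ ∑ k ∈ Finset.Icc i K, 12 * (W:ℤ) * (k.choose i : ℤ) := by
          refine Finset.sum_le_sum fun k _ => ?_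
          rw [abs_mul, abs_of_nonneg (by positivity : (0:ℤ) ≤ (k.choose i : ℤ))]
          exact mul_le_mul_of_nonneg_right (hcoeff k) (by positivity)
      _ = 12 * (W:ℤ) * ((K+1).choose (i+1) : ℤ) := by
          rw [← Finset.mul_sum]
          congr 1
          rw [← Nat.sum_Icc_choose]
          push_cast
          rfl
  -- the tail
  set R : ℝ := ∑ i ∈ Finset.Ico (j+1) (K+1), (b i : ℝ) * (-ε)^i with hR
  have hεj : (0:ℝ) < ε ^ j := pow_pos hε j
  have habs : ∀ i : ℕ, |(b i : ℝ) * (-ε)^i| = |(b i : ℤ)| * ε ^ i := by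
    intro i
    rw [abs_mul, abs_pow, abs_neg, abs_of_pos hε]
    push_cast
    rfl
  have hRbound : |R| ≤ 12 * (W:ℝ) * c * ε ^ (j+1) * 2 := by
    have h1 : |R| ≤ ∑ i ∈ Finset.Ico (j+1) (K+1), |(b i : ℝ) * (-ε)^i| :=
      Finset.abs_sum_le_sum_abs _ _
    have h2 : ∑ i ∈ Finset.Ico (j+1) (K+1), |(b i : ℝ) * (-ε)^i|
        = ∑ m ∈ Finset.range (K + 1 - (j+1)), |(b (j+1+m) : ℝ) * (-ε)^(j+1+m)| := by
      rw [Finset.sum_Ico_eq_sum_range]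
    have h3 : ∀ m ∈ Finset.range (K + 1 - (j+1)),
        |(b (j+1+m) : ℝ) * (-ε)^(j+1+m)|
          ≤ (12 * (W:ℝ) * c * ε ^ (j+1)) * ((c:ℝ) * ε) ^ m := by
      intro m hm
      rw [habs]
      have hbm : |b (j+1+m)| ≤ 12 * (W:ℤ) * ((c:ℤ)^(m+1)) := by
        have h := choose_pow_bound (K+1) j hj2K (m+1) (by omega)
        have hcast : (((K+1).choose (j+1+m+1) : ℤ)) ≤ ((c:ℤ))^(m+1) := by
          exact_mod_cast h
        exact le_trans (hbbound (j+1+m))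
          (mul_le_mul_of_nonneg_left hcast (by positivity))
      have hbmR : (|b (j+1+m)| : ℝ) ≤ 12 * (W:ℝ) * (c:ℝ)^(m+1) := by
        exact_mod_cast hbm
      have hεnn : (0:ℝ) ≤ ε ^ (j+1+m) := le_of_lt (pow_pos hε _)
      have hle : (|b (j+1+m)| : ℝ) * ε ^ (j+1+m)
          ≤ (12 * (W:ℝ) * (c:ℝ)^(m+1)) * ε ^ (j+1+m) :=
        mul_le_mul_of_nonneg_right hbmR hεnn
      have heq : (12 * (W:ℝ) * (c:ℝ)^(m+1)) * ε ^ (j+1+m)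
          = (12 * (W:ℝ) * c * ε ^ (j+1)) * ((c:ℝ) * ε) ^ m := by
        rw [pow_succ, pow_add, mul_pow]
        ring
      rw [← heq]
      exact_mod_cast hle
    have hcε0 : (0:ℝ) ≤ (c:ℝ) * ε := by positivity
    have hcε2 : (c:ℝ) * ε ≤ 1/2 := by
      nlinarith
    have h4 : ∑ m ∈ Finset.range (K + 1 - (j+1)), ((c:ℝ) * ε) ^ m ≤ 2 :=
      geo_bound _ hcε0 hcε2 _
    have h5 : ∑ m ∈ Finset.range (K + 1 - (j+1)),
        (12 * (W:ℝ) * c * ε ^ (j+1)) * ((c:ℝ) * ε) ^ m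
          ≤ (12 * (W:ℝ) * c * ε ^ (j+1)) * 2 := by
      rw [← Finset.mul_sum]
      have hfac : (0:ℝ) ≤ 12 * (W:ℝ) * c * ε ^ (j+1) := by positivity
      exact mul_le_mul_of_nonneg_left h4 hfac
    calc |R| ≤ ∑ m ∈ Finset.range (K + 1 - (j+1)), |(b (j+1+m) : ℝ) * (-ε)^(j+1+m)| := by
          rw [← h2]; exact h1
      _ ≤ ∑ m ∈ Finset.range (K + 1 - (j+1)),
            (12 * (W:ℝ) * c * ε ^ (j+1)) * ((c:ℝ) * ε) ^ m := Finset.sum_le_sum h3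
      _ ≤ (12 * (W:ℝ) * c * ε ^ (j+1)) * 2 := h5
      _ = 12 * (W:ℝ) * c * ε ^ (j+1) * 2 := by ring
  -- |R| < ε^j
  have hRlt : |R| < ε ^ j := by
    have h1 : 12 * (W:ℝ) * c * ε ^ (j+1) * 2 = (ε * (24 * W * c)) * ε ^ j := by
      rw [pow_succ]
      ring
    have h2 : (ε * (24 * W * c)) * ε ^ j < 1 * ε ^ j :=
      mul_lt_mul_of_pos_right hεlt hεj
    calc |R| ≤ 12 * (W:ℝ) * c * ε ^ (j+1) * 2 := hRbound
      _ = (ε * (24 * W * c)) * ε ^ j := h1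
      _ < 1 * ε ^ j := h2
      _ = ε ^ j := one_mul _
  -- |b j| ≥ 1
  have hbj1 : (1:ℝ) ≤ |(b j : ℝ)| := by
    have : (1:ℤ) ≤ |b j| := Int.one_le_abs hbj
    calc (1:ℝ) ≤ (|b j| : ℝ) := by exact_mod_cast this
      _ = |(b j : ℝ)| := by push_cast; rfl
  have hmain : |(b j : ℝ) * (-ε)^j| ≥ ε ^ j := by
    rw [abs_mul, abs_pow, abs_neg, abs_of_pos hε]
    nlinarith
  intro h0
  rw [hS, hsplit] at h0
  have : (b j : ℝ) * (-ε)^j = -R := by linarith [h0]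
  have habsj : |(b j : ℝ) * (-ε)^j| = |R| := by rw [this, abs_neg]
  rw [habsj] at hmain
  linarith
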